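/- Let ψ : [0,∞) → [0,∞) be increasing convex with ψ ∈ Δ₂ (i.e. ψ(2s) ≤ C_ψ(ψ(s)+1) for all s), let υ : ℝ^N → ℝ^N be γ-Hölder continuous with constant C_υ for some γ ∈ (0,1], and define f(x,ξ) := ψ(|⟨υ(x), ξ⟩|) + |ξ|^{N/γ} on B(0,2) × ℝ^N. Then for every L > 0 there exists C_L > 0 such that for all x, y with |x−y| < ε and all ξ with min over nearby points of f bounded: if |ξ| ≤ L^{γ/N}ε^{−γ}, then f(x,ξ) ≤ C_L(f(y,ξ) + 1), with C_L = C_ψ(1 + max_{s ≤ C_υ L^{γ/N}} ψ(s)). -/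

import Mathlib

open Set

/-- Let `ψ` be increasing convex with the `Δ₂` condition
`ψ(2s) ≤ C_ψ(ψ(s)+1)`, and `υ : ℝ^N → ℝ^N` be `γ`-Hölder with constant `C_υ`,
`γ ∈ (0,1]`. Then `f(x,ξ) = ψ(|⟨υ(x),ξ⟩|) + |ξ|^{N/γ}` on `B(0,2) × ℝ^N` satisfies:
for every `L > 0` there is `C_L > 0` such that if `|x−y| < ε` and
`|ξ| ≤ L^{γ/N} ε^{−γ}`, then `f(x,ξ) ≤ C_L (f(y,ξ) + 1)`. -/
theorem stmt15 {N : ℕ} (hN : 0 < N)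
    (ψ : ℝ → ℝ) (hψ_nonneg : ∀ s, 0 ≤ ψ s)
    (hψ_mono : StrictMonoOn ψ (Ici 0)) (hψ_conv : ConvexOn ℝ (Ici 0) ψ)
    (Cψ : ℝ) (hCψ : 1 ≤ Cψ)
    (hΔ₂ : ∀ s : ℝ, 0 ≤ s → ψ (2 * s) ≤ Cψ * (ψ s + 1))
    (γ : ℝ) (hγ0 : 0 < γ) (hγ1 : γ ≤ 1)
    (υ : EuclideanSpace ℝ (Fin N) → EuclideanSpace ℝ (Fin N))
    (Cυ : ℝ) (hCυ : 0 ≤ Cυ)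
    (hHolder : ∀ x y, ‖υ x - υ y‖ ≤ Cυ * dist x y ^ γ) :
    ∀ L : ℝ, 0 < L → ∃ CL > (0:ℝ),
      ∀ ε : ℝ, 0 < ε →
        ∀ x ∈ Metric.ball (0 : EuclideanSpace ℝ (Fin N)) 2,
        ∀ y ∈ Metric.ball (0 : EuclideanSpace ℝ (Fin N)) 2,
          dist x y < ε → ∀ ξ : EuclideanSpace ℝ (Fin N),
            ‖ξ‖ ≤ L ^ (γ / N) * ε ^ (-γ) →
              ψ |(inner ℝ (υ x) ξ : ℝ)| + ‖ξ‖ ^ ((N:ℝ) / γ)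
                ≤ CL * (ψ |(inner ℝ (υ y) ξ : ℝ)| + ‖ξ‖ ^ ((N:ℝ) / γ) + 1) := by
  intro L hL
  set M : ℝ := Cυ * L ^ (γ / (N : ℝ)) with hMdef
  have hM : 0 ≤ M := mul_nonneg hCυ (Real.rpow_nonneg hL.le _)
  have hψM : 0 ≤ ψ M := hψ_nonneg M
  have hCψ0 : 0 < Cψ := lt_of_lt_of_le one_pos hCψ
  refine ⟨Cψ * (1 + ψ M), by positivity, ?_⟩
  intro ε hε x hx y hy hxy ξ hξ
  have hmono := hψ_mono.monotoneOn
  set a : ℝ := |(inner ℝ (υ y) ξ : ℝ)| with hadef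
  set b : ℝ := |(inner ℝ (υ x - υ y) ξ : ℝ)| with hbdef
  have ha0 : 0 ≤ a := abs_nonneg _
  have hb0 : 0 ≤ b := abs_nonneg _
  have hξ0 : 0 ≤ ‖ξ‖ := norm_nonneg _
  -- bound b ≤ M
  have hb : b ≤ M := by
    have h1 : b ≤ ‖υ x - υ y‖ * ‖ξ‖ := abs_real_inner_le_norm _ _
    have h2 : ‖υ x - υ y‖ ≤ Cυ * ε ^ γ := by
      refine (hHolder x y).trans (mul_le_mul_of_nonneg_left ?_ hCυ)
      exact Real.rpow_le_rpow dist_nonneg hxy.le hγ0.le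
    have h3 : ‖υ x - υ y‖ * ‖ξ‖ ≤ (Cυ * ε ^ γ) * (L ^ (γ / (N:ℝ)) * ε ^ (-γ)) := by
      apply mul_le_mul h2 hξ hξ0
      positivity
    have h4 : (Cυ * ε ^ γ) * (L ^ (γ / (N:ℝ)) * ε ^ (-γ)) = M * (ε ^ γ * ε ^ (-γ)) := by
      ring
    have h5 : ε ^ γ * ε ^ (-γ) = 1 := by
      rw [← Real.rpow_add hε]
      simp
    calc b ≤ ‖υ x - υ y‖ * ‖ξ‖ := h1
      _ ≤ (Cυ * ε ^ γ) * (L ^ (γ / (N:ℝ)) * ε ^ (-γ)) := h3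
      _ = M * (ε ^ γ * ε ^ (-γ)) := h4
      _ = M := by rw [h5, mul_one]
  -- main estimate on ψ term
  have hax : |(inner ℝ (υ x) ξ : ℝ)| ≤ a + b := by
    have : (inner ℝ (υ x) ξ : ℝ) = (inner ℝ (υ y) ξ : ℝ) + (inner ℝ (υ x - υ y) ξ : ℝ) := by
      rw [inner_sub_left]; ring
    rw [this]
    exact abs_add_le _ _
  have hmax0 : 0 ≤ max a b := le_max_of_le_left ha0
  have step1 : ψ |(inner ℝ (υ x) ξ : ℝ)| ≤ ψ (2 * max a b) := by
    apply hmono (mem_Ici.mpr (abs_nonneg _)) (mem_Ici.mpr (by linarith))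
    calc |(inner ℝ (υ x) ξ : ℝ)| ≤ a + b := hax
      _ ≤ max a b + max a b := add_le_add (le_max_left _ _) (le_max_right _ _)
      _ = 2 * max a b := by ring
  have step2 : ψ (2 * max a b) ≤ Cψ * (ψ (max a b) + 1) := hΔ₂ _ hmax0
  have step3 : ψ (max a b) ≤ ψ a + ψ M := by
    rcases le_total b a with h | h
    · rw [max_eq_left h]; linarith
    · rw [max_eq_right h]
      have : ψ b ≤ ψ M := hmono (mem_Ici.mpr hb0) (mem_Ici.mpr hM) hb
      linarith [hψ_nonneg a]
  have key : ψ |(inner ℝ (υ x) ξ : ℝ)| ≤ Cψ * (1 + ψ M) * (ψ a + 1) := by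
    have h1 : ψ |(inner ℝ (υ x) ξ : ℝ)| ≤ Cψ * (ψ a + ψ M + 1) := by
      refine step1.trans (step2.trans ?_)
      nlinarith
    refine h1.trans ?_
    have hψa := hψ_nonneg a
    nlinarith [mul_nonneg hCψ0.le (mul_nonneg hψM hψa)]
  have hCL1 : (1:ℝ) ≤ Cψ * (1 + ψ M) := by nlinarith
  have ht0 : 0 ≤ ‖ξ‖ ^ ((N:ℝ) / γ) := Real.rpow_nonneg hξ0 _
  have ht : ‖ξ‖ ^ ((N:ℝ) / γ) ≤ Cψ * (1 + ψ M) * ‖ξ‖ ^ ((N:ℝ) / γ) :=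
    le_mul_of_one_le_left ht0 hCL1
  nlinarith [hψ_nonneg a]
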